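/- arXiv:2503.16250 — 2 statements merged into one kernel-verified Lean document; each statement's English description precedes it below -/
import Mathlib

section
/- Let n ≥ 3. In ℤ^{n+1}, the identity n²·E_{n−1} = (n+2)·D₂ − 4·D₁ − (n−2)·S₀ − (n+2)·Σ_{i=1}^{n−2} (n−(i+1))·S_i holds, where D₁ = nH − (n−1)E₁ − E₂ − ⋯ − E_{n−1}, D₂ = 3H − 2E₁ − E_n, S₀ = −2H + 3E₁ − E₂ − ⋯ − E_{n−2}, S_i = E_{n−1−i} − E_{n−i} for 1 ≤ i ≤ n−3, and S_{n−2} = H − E₁ − E₂ − E_n. -/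
open Finset

/-- The class of the line `H` in `H₂(Xₙ;ℤ) ≅ ℤ^{n+1}` (coordinate `0`). -/
def Hv (n : ℕ) : Fin (n + 1) → ℤ := Pi.single 0 1

open Fin.NatCast in
/-- The exceptional class `E_j` in `H₂(Xₙ;ℤ) ≅ ℤ^{n+1}` (coordinate `j`, for `1 ≤ j ≤ n`). -/
def Ev (n : ℕ) (j : ℕ) : Fin (n + 1) → ℤ := Pi.single (j : Fin (n + 1)) 1

/-- The class `D₁ = nH - (n-1)E₁ - E₂ - ⋯ - E_{n-1}`. -/
def D₁ (n : ℕ) : Fin (n + 1) → ℤ :=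
  n • Hv n - (n - 1) • Ev n 1 - ∑ j ∈ Finset.Icc 2 (n - 1), Ev n j

/-- The class `D₂ = 3H - 2E₁ - Eₙ`. -/
def D₂ (n : ℕ) : Fin (n + 1) → ℤ := 3 • Hv n - 2 • Ev n 1 - Ev n n

/-- The classes of the spheres of the `Cₙ`-configuration:
`S₀ = -2H + 3E₁ - E₂ - ⋯ - E_{n-2}`, `S_i = E_{n-1-i} - E_{n-i}` for `1 ≤ i ≤ n-3`,
and `S_{n-2} = H - E₁ - E₂ - Eₙ`. -/
def Sc (n : ℕ) (i : ℕ) : Fin (n + 1) → ℤ :=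
  if i = 0 then (-2 : ℤ) • Hv n + 3 • Ev n 1 - ∑ j ∈ Finset.Icc 2 (n - 2), Ev n j
  else if i = n - 2 then Hv n - Ev n 1 - Ev n 2 - Ev n n
  else Ev n (n - 1 - i) - Ev n (n - i)

private lemma tele (n : ℕ) (m : ℕ) (hm : 1 ≤ m) (hmn : m ≤ n - 3) :
    ∑ i ∈ Finset.Icc 1 m, ((n : ℤ) - ((i : ℤ) + 1)) • (Ev n (n - 1 - i) - Ev n (n - i)) =
      ((n : ℤ) - 1 - (m : ℤ)) • Ev n (n - 1 - m) +
        ∑ j ∈ Finset.Icc (n - m) (n - 2), Ev n j - ((n : ℤ) - 2) • Ev n (n - 1) := by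
  induction m, hm using Nat.le_induction with
  | base =>
    rw [Finset.Icc_self, Finset.sum_singleton, Finset.Icc_eq_empty (by omega), Finset.sum_empty,
      show n - 1 - 1 = n - 2 from by omega]
    push_cast
    module
  | succ m hm ih =>
    rw [← Finset.insert_Icc_right_eq_Icc_add_one (by omega : 1 ≤ m + 1),
      Finset.sum_insert (by rw [Finset.mem_Icc]; omega), ih (by omega),
      show n - m = n - (m + 1) + 1 from by omega,
      ← Finset.insert_Icc_add_one_left_eq_Icc (a := n - (m + 1)) (by omega),
      Finset.sum_insert (by rw [Finset.mem_Icc]; omega),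
      show n - 1 - m = n - (m + 1) from by omega]
    push_cast
    module

/-- The identity
`n²·E_{n-1} = (n+2)·D₂ - 4·D₁ - (n-2)·S₀ - (n+2)·Σ_{i=1}^{n-2} (n-(i+1))·S_i`
in `ℤ^{n+1}`. -/
theorem period_identity_En_minus_one (n : ℕ) (hn : 3 ≤ n) :
    ((n : ℤ) ^ 2) • Ev n (n - 1) =
      ((n : ℤ) + 2) • D₂ n - (4 : ℤ) • D₁ n - ((n : ℤ) - 2) • Sc n 0 -
        ((n : ℤ) + 2) •
          ∑ i ∈ Finset.Icc 1 (n - 2), ((n : ℤ) - ((i : ℤ) + 1)) • Sc n i := by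
  rcases eq_or_lt_of_le hn with h3 | h4
  · subst h3
    decide
  · have h4 : 4 ≤ n := h4
    have hmid : ∑ i ∈ Finset.Icc 1 (n - 3), ((n : ℤ) - ((i : ℤ) + 1)) • Sc n i
        = ∑ i ∈ Finset.Icc 1 (n - 3), ((n : ℤ) - ((i : ℤ) + 1)) •
            (Ev n (n - 1 - i) - Ev n (n - i)) :=
      Finset.sum_congr rfl (fun i hi => by
        rw [Finset.mem_Icc] at hi
        have h0 : ¬ (i = 0) := by omega
        have h2 : ¬ (i = n - 2) := by omega
        simp only [Sc, if_neg h0, if_neg h2])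
    have htop : Sc n (n - 2) = Hv n - Ev n 1 - Ev n 2 - Ev n n := by
      have h0 : ¬ ((n : ℕ) - 2 = 0) := by omega
      simp only [Sc, if_neg h0, if_pos rfl, if_true]
    have hS0 : Sc n 0 = (-2 : ℤ) • Hv n + 3 • Ev n 1
        - ∑ j ∈ Finset.Icc 2 (n - 2), Ev n j := by
      simp only [Sc, if_pos rfl, if_true]
    have hsum : ∑ i ∈ Finset.Icc 1 (n - 2), ((n : ℤ) - ((i : ℤ) + 1)) • Sc n i
        = (2 : ℤ) • Ev n 2 + ∑ j ∈ Finset.Icc 3 (n - 2), Ev n j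
            - ((n : ℤ) - 2) • Ev n (n - 1)
            + ((n : ℤ) - (((n - 2 : ℕ) : ℤ) + 1)) • (Hv n - Ev n 1 - Ev n 2 - Ev n n) := by
      rw [show n - 2 = n - 3 + 1 from by omega,
        ← Finset.insert_Icc_right_eq_Icc_add_one (by omega : (1 : ℕ) ≤ n - 3 + 1),
        Finset.sum_insert (by rw [Finset.mem_Icc]; omega),
        show n - 3 + 1 = n - 2 from by omega, htop, hmid,
        tele n (n - 3) (by omega) (le_rfl),
        show n - 1 - (n - 3) = 2 from by omega,
        show n - (n - 3) = 3 from by omega,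
        show ((n - 3 : ℕ) : ℤ) = (n : ℤ) - 3 from by omega,
        show ((n - 2 : ℕ) : ℤ) = (n : ℤ) - 2 from by omega]
      module
    rw [hsum, D₁, D₂, hS0,
      show ∑ j ∈ Finset.Icc 2 (n - 1), Ev n j
          = Ev n 2 + ∑ j ∈ Finset.Icc 3 (n - 2), Ev n j + Ev n (n - 1) from by
        rw [show n - 1 = n - 2 + 1 from by omega,
          ← Finset.insert_Icc_right_eq_Icc_add_one (by omega : (2 : ℕ) ≤ n - 2 + 1),
          Finset.sum_insert (by rw [Finset.mem_Icc]; omega),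
          ← Finset.insert_Icc_add_one_left_eq_Icc (a := 2) (by omega : (2 : ℕ) ≤ n - 2),
          Finset.sum_insert (by rw [Finset.mem_Icc]; omega),
          show n - 2 + 1 = n - 1 from by omega]
        norm_num
        abel,
      show ∑ j ∈ Finset.Icc 2 (n - 2), Ev n j
          = Ev n 2 + ∑ j ∈ Finset.Icc 3 (n - 2), Ev n j from by
        rw [← Finset.insert_Icc_add_one_left_eq_Icc (a := 2) (by omega : (2 : ℕ) ≤ n - 2),
          Finset.sum_insert (by rw [Finset.mem_Icc]; omega)]; rfl,
      show (n : ℕ) • Hv n = (n : ℤ) • Hv n from (natCast_zsmul _ _).symm,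
      show (n - 1 : ℕ) • Ev n 1 = ((n : ℤ) - 1) • Ev n 1 from by
        rw [← natCast_zsmul]; congr 1; omega,
      show ((n - 2 : ℕ) : ℤ) = (n : ℤ) - 2 from by omega]
    module
end

section
/- Let n ≥ 3. The n+1 vectors D₁ = nH − (n−1)E₁ − E₂ − ⋯ − E_{n−1}, D₂ = 3H − 2E₁ − E_n, S₀ = −2H + 3E₁ − E₂ − ⋯ − E_{n−2}, S_i = E_{n−1−i} − E_{n−i} (1 ≤ i ≤ n−3), and S_{n−2} = H − E₁ − E₂ − E_n generate a subgroup of ℤ^{n+1} of finite index equal to n²; in particular they are linearly independent over ℚ and form a basis of ℚ^{n+1}. -/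
open Finset

/-- The family `D₁, D₂, S₀, …, S_{n-2}` indexed by `Fin (n+1)`. -/
def famF (n : ℕ) (i : Fin (n + 1)) : Fin (n + 1) → ℤ :=
  if (i : ℕ) = 0 then D₁ n else if (i : ℕ) = 1 then D₂ n else Sc n ((i : ℕ) - 2)

/-- the generating set -/
def Lgen (n : ℕ) : Set (Fin (n + 1) → ℤ) :=
  insert (D₁ n) (insert (D₂ n) (Sc n '' Set.Iic (n - 2)))

/-- the subgroup -/
def Lsub (n : ℕ) : AddSubgroup (Fin (n + 1) → ℤ) := AddSubgroup.closure (Lgen n)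

/-- the auxiliary vector g -/
def gv (n : ℕ) : Fin (n + 1) → ℤ := Hv n - Ev n 1

section
variable {n : ℕ}

lemma hD1 : D₁ n ∈ Lsub n := AddSubgroup.subset_closure (Set.mem_insert _ _)
lemma hD2 : D₂ n ∈ Lsub n :=
  AddSubgroup.subset_closure (Set.mem_insert_of_mem _ (Set.mem_insert _ _))
lemma hSc {m : ℕ} (hm : m ≤ n - 2) : Sc n m ∈ Lsub n :=
  AddSubgroup.subset_closure (Set.mem_insert_of_mem _ (Set.mem_insert_of_mem _ ⟨m, hm, rfl⟩))

lemma Sc_zero : Sc n 0 = (-2 : ℤ) • Hv n + 3 • Ev n 1 - ∑ j ∈ Finset.Icc 2 (n - 2), Ev n j := by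
  simp [Sc]

lemma Sc_last (hn : 3 ≤ n) : Sc n (n - 2) = Hv n - Ev n 1 - Ev n 2 - Ev n n := by
  rw [Sc, if_neg (by omega), if_pos rfl]

lemma Sc_mid (hn : 3 ≤ n) {k : ℕ} (h2 : 2 ≤ k) (hk : k ≤ n - 2) :
    Sc n (n - 1 - k) = Ev n k - Ev n (k + 1) := by
  have e1 : n - 1 - (n - 1 - k) = k := by omega
  have e2 : n - (n - 1 - k) = k + 1 := by omega
  rw [Sc, if_neg (by omega), if_neg (by omega), e1, e2]

lemma hstep (hn : 3 ≤ n) {k : ℕ} (h2 : 2 ≤ k) (hk : k ≤ n - 2) : Ev n k - Ev n (k + 1) ∈ Lsub n := by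
  rw [← Sc_mid hn h2 hk]; exact hSc (by omega)

lemma htel (hn : 3 ≤ n) {j : ℕ} (h2 : 2 ≤ j) (hj : j ≤ n - 1) : Ev n j - Ev n 2 ∈ Lsub n := by
  induction j, h2 using Nat.le_induction with
  | base => simpa using (Lsub n).zero_mem
  | succ k hk ih =>
      have h1 : Ev n (k + 1) - Ev n 2 = (Ev n k - Ev n 2) - (Ev n k - Ev n (k + 1)) := by abel
      rw [h1]
      exact sub_mem (ih (by omega)) (hstep hn (by omega) (by omega))

lemma hsum (hn : 3 ≤ n) {m : ℕ} (hm : m ≤ n - 1) : (∑ j ∈ Icc 2 m, (Ev n j - Ev n 2)) ∈ Lsub n :=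
  sum_mem fun j hj => htel hn (mem_Icc.mp hj).1 (le_trans (mem_Icc.mp hj).2 hm)

lemma sum_split {m : ℕ} (hm : 1 ≤ m) :
    ∑ j ∈ Icc 2 m, (Ev n j - Ev n 2) =
      (∑ j ∈ Icc 2 m, Ev n j) - ((m : ℤ) - 1) • Ev n 2 := by
  rw [sum_sub_distrib, sum_const, Nat.card_Icc, ← natCast_zsmul]
  congr 2
  omega
end

section
variable {n : ℕ}

lemma cast1 (hn : 3 ≤ n) : ((n - 1 : ℕ) : ℤ) = (n : ℤ) - 1 := by omega
lemma cast2 (hn : 3 ≤ n) : ((n - 2 : ℕ) : ℤ) = (n : ℤ) - 2 := by omega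

lemma hR1mem (hn : 3 ≤ n) :
    (2 * (n : ℤ) - 8) • Hv n + (6 - (n : ℤ)) • Ev n 1 ∈ Lsub n := by
  have hid : (2 * (n : ℤ) - 8) • Hv n + (6 - (n : ℤ)) • Ev n 1 =
      Sc n 0 + (∑ j ∈ Icc 2 (n - 2), (Ev n j - Ev n 2)) +
        ((n : ℤ) - 3) • (D₂ n - Sc n (n - 2)) := by
    rw [Sc_zero, Sc_last hn, sum_split (by omega), cast2 hn, D₂]
    module
  rw [hid]
  exact add_mem (add_mem (hSc (by omega)) (hsum hn (by omega)))
    (zsmul_mem (sub_mem hD2 (hSc le_rfl)) _)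

lemma hR2mem (hn : 3 ≤ n) :
    (3 * (n : ℤ) - 4) • Hv n - (2 * (n : ℤ) - 3) • Ev n 1 ∈ Lsub n := by
  have hid : (3 * (n : ℤ) - 4) • Hv n - (2 * (n : ℤ) - 3) • Ev n 1 =
      D₁ n + (∑ j ∈ Icc 2 (n - 1), (Ev n j - Ev n 2)) +
        ((n : ℤ) - 2) • (D₂ n - Sc n (n - 2)) := by
    rw [Sc_last hn, sum_split (by omega), cast1 hn, D₁, D₂]
    have hc : (n - 1) • Ev n 1 = ((n : ℤ) - 1) • Ev n 1 := by
      rw [← natCast_zsmul]; congr 1; omega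
    rw [hc]
    module
  rw [hid]
  exact add_mem (add_mem hD1 (hsum hn le_rfl)) (zsmul_mem (sub_mem hD2 (hSc le_rfl)) _)

lemma hr3mem (hn : 3 ≤ n) : ((n : ℤ) + 3) • Ev n 1 - ((n : ℤ) + 4) • Hv n ∈ Lsub n := by
  have hid : ((n : ℤ) + 3) • Ev n 1 - ((n : ℤ) + 4) • Hv n =
      ((2 * (n : ℤ) - 8) • Hv n + (6 - (n : ℤ)) • Ev n 1) -
        ((3 * (n : ℤ) - 4) • Hv n - (2 * (n : ℤ) - 3) • Ev n 1) := by module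
  rw [hid]; exact sub_mem (hR1mem hn) (hR2mem hn)

lemma q0 (hn : 3 ≤ n) : Hv n + ((n : ℤ) + 3) • gv n ∈ Lsub n := by
  have hid : Hv n + ((n : ℤ) + 3) • gv n =
      -(((n : ℤ) + 3) • Ev n 1 - ((n : ℤ) + 4) • Hv n) := by rw [gv]; module
  rw [hid]; exact neg_mem (hr3mem hn)

lemma q1 (hn : 3 ≤ n) : Ev n 1 + ((n : ℤ) + 4) • gv n ∈ Lsub n := by
  have hid : Ev n 1 + ((n : ℤ) + 4) • gv n =
      -(((n : ℤ) + 3) • Ev n 1 - ((n : ℤ) + 4) • Hv n) := by rw [gv]; module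
  rw [hid]; exact neg_mem (hr3mem hn)

lemma q2 (hn : 3 ≤ n) : Ev n 2 - ((n : ℤ) + 2) • gv n ∈ Lsub n := by
  have hid : Ev n 2 - ((n : ℤ) + 2) • gv n =
      (D₂ n - Sc n (n - 2)) + (((n : ℤ) + 3) • Ev n 1 - ((n : ℤ) + 4) • Hv n) := by
    rw [gv, Sc_last hn, D₂]; module
  rw [hid]; exact add_mem (sub_mem hD2 (hSc le_rfl)) (hr3mem hn)

lemma qj (hn : 3 ≤ n) {j : ℕ} (h2 : 2 ≤ j) (hj : j ≤ n - 1) :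
    Ev n j - ((n : ℤ) + 2) • gv n ∈ Lsub n := by
  have hid : Ev n j - ((n : ℤ) + 2) • gv n =
      (Ev n 2 - ((n : ℤ) + 2) • gv n) + (Ev n j - Ev n 2) := by abel
  rw [hid]; exact add_mem (q2 hn) (htel hn h2 hj)

lemma qn (hn : 3 ≤ n) : Ev n n + ((n : ℤ) + 1) • gv n ∈ Lsub n := by
  have hid : Ev n n + ((n : ℤ) + 1) • gv n =
      -Sc n (n - 2) + (Hv n + ((n : ℤ) + 3) • gv n) - (Ev n 1 + ((n : ℤ) + 4) • gv n)
        - (Ev n 2 - ((n : ℤ) + 2) • gv n) := by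
    rw [Sc_last hn]; module
  rw [hid]
  exact sub_mem (sub_mem (add_mem (neg_mem (hSc le_rfl)) (q0 hn)) (q1 hn)) (q2 hn)

lemma qg (hn : 3 ≤ n) : ((n : ℤ) ^ 2) • gv n ∈ Lsub n := by
  have hid : ((n : ℤ) ^ 2) • gv n =
      (1 - (n : ℤ)) • ((2 * (n : ℤ) - 8) • Hv n + (6 - (n : ℤ)) • Ev n 1) -
        (2 - (n : ℤ)) • ((3 * (n : ℤ) - 4) • Hv n - (2 * (n : ℤ) - 3) • Ev n 1) := by
    rw [gv]; module
  rw [hid]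
  exact sub_mem (zsmul_mem (hR1mem hn) _) (zsmul_mem (hR2mem hn) _)

end

/-- weights -/
def wt (n : ℕ) (j : Fin (n + 1)) : ZMod (n ^ 2) :=
  if (j : ℕ) = 0 then -((n : ZMod (n ^ 2)) + 3)
  else if (j : ℕ) = 1 then -((n : ZMod (n ^ 2)) + 4)
  else if (j : ℕ) = n then -((n : ZMod (n ^ 2)) + 1)
  else (n : ZMod (n ^ 2)) + 2

/-- the period homomorphism -/
def φ (n : ℕ) : (Fin (n + 1) → ℤ) →+ ZMod (n ^ 2) :=
  AddMonoidHom.mk' (fun v => ∑ j, wt n j * ((v j : ℤ) : ZMod (n ^ 2))) (by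
    intro a b
    rw [← Finset.sum_add_distrib]
    refine Finset.sum_congr rfl fun j _ => ?_
    simp [mul_add])

section
variable {n : ℕ}

lemma φ_apply (v : Fin (n + 1) → ℤ) :
    φ n v = ∑ j, wt n j * ((v j : ℤ) : ZMod (n ^ 2)) := rfl

lemma φ_single (a : Fin (n + 1)) : φ n (Pi.single a 1) = wt n a := by
  rw [φ_apply]
  simp [Pi.single_apply, apply_ite (fun x : ℤ => (x : ZMod (n ^ 2))), mul_ite,
    Finset.sum_ite_eq']
end

section
variable {n : ℕ}

open Fin.NatCast in
lemma wt_coe (hn : 3 ≤ n) {j : ℕ} (hj : j ≤ n) :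
    wt n (j : Fin (n + 1)) =
      if j = 0 then -((n : ZMod (n ^ 2)) + 3)
      else if j = 1 then -((n : ZMod (n ^ 2)) + 4)
      else if j = n then -((n : ZMod (n ^ 2)) + 1)
      else (n : ZMod (n ^ 2)) + 2 := by
  rw [wt, Fin.val_cast_of_lt (by omega)]

lemma φ_Hv : φ n (Hv n) = -((n : ZMod (n ^ 2)) + 3) := by
  rw [Hv, φ_single, wt]; simp

lemma φ_E1 (hn : 3 ≤ n) : φ n (Ev n 1) = -((n : ZMod (n ^ 2)) + 4) := by
  rw [Ev, φ_single, wt_coe hn (by omega)]; simp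

lemma φ_E2 (hn : 3 ≤ n) : φ n (Ev n 2) = (n : ZMod (n ^ 2)) + 2 := by
  rw [Ev, φ_single, wt_coe hn (by omega)]
  rw [if_neg (by omega), if_neg (by omega), if_neg (by omega)]

lemma φ_En (hn : 3 ≤ n) : φ n (Ev n n) = -((n : ZMod (n ^ 2)) + 1) := by
  rw [Ev, φ_single, wt_coe hn (by omega)]
  rw [if_neg (by omega), if_neg (by omega), if_pos rfl]

lemma φ_Emid (hn : 3 ≤ n) {j : ℕ} (h2 : 2 ≤ j) (hj : j ≤ n - 1) :
    φ n (Ev n j) = (n : ZMod (n ^ 2)) + 2 := by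
  rw [Ev, φ_single, wt_coe hn (by omega)]
  rw [if_neg (by omega), if_neg (by omega), if_neg (by omega)]

lemma φ_sum (hn : 3 ≤ n) {m : ℕ} (h1 : 1 ≤ m) (hm : m ≤ n - 1) :
    φ n (∑ j ∈ Icc 2 m, Ev n j) = ((m : ZMod (n ^ 2)) - 1) * ((n : ZMod (n ^ 2)) + 2) := by
  rcases Nat.lt_or_ge m 2 with h | h
  · have : m = 1 := by omega
    subst this
    rw [Finset.Icc_eq_empty (by omega), Finset.sum_empty]
    norm_num
  · rw [map_sum]
    rw [Finset.sum_congr rfl (fun j hj => φ_Emid hn (mem_Icc.mp hj).1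
        (le_trans (mem_Icc.mp hj).2 hm))]
    rw [Finset.sum_const, Nat.card_Icc, nsmul_eq_mul]
    congr 1
    have e : m + 1 - 2 = m - 1 := by omega
    rw [e, Nat.cast_sub h1, Nat.cast_one]

lemma nsq_zero : ((n : ZMod (n ^ 2))) ^ 2 = 0 := by
  rw [← Nat.cast_pow, ZMod.natCast_self]

lemma φ_D1 (hn : 3 ≤ n) : φ n (D₁ n) = 0 := by
  rw [D₁, map_sub, map_sub, map_nsmul, map_nsmul, φ_Hv, φ_E1 hn,
    φ_sum hn (by omega) le_rfl, nsmul_eq_mul, nsmul_eq_mul, Nat.cast_sub (by omega)]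
  push_cast
  linear_combination (-1 : ZMod (n ^ 2)) * nsq_zero

lemma φ_D2 (hn : 3 ≤ n) : φ n (D₂ n) = 0 := by
  rw [D₂, map_sub, map_sub, map_nsmul, map_nsmul, φ_Hv, φ_E1 hn, φ_En hn,
    nsmul_eq_mul, nsmul_eq_mul]
  push_cast
  ring

lemma φ_Sc0 (hn : 3 ≤ n) : φ n (Sc n 0) = 0 := by
  rw [Sc_zero, map_sub, map_add, map_zsmul, map_nsmul, φ_Hv, φ_E1 hn,
    φ_sum hn (by omega) (by omega), Nat.cast_sub (by omega), nsmul_eq_mul, zsmul_eq_mul]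
  push_cast
  linear_combination (-1 : ZMod (n ^ 2)) * nsq_zero

lemma φ_ScLast (hn : 3 ≤ n) : φ n (Sc n (n - 2)) = 0 := by
  rw [Sc_last hn, map_sub, map_sub, map_sub, φ_Hv, φ_E1 hn, φ_E2 hn, φ_En hn]
  ring

lemma φ_ScMid (hn : 3 ≤ n) {m : ℕ} (h1 : 1 ≤ m) (hm : m ≤ n - 3) : φ n (Sc n m) = 0 := by
  rw [Sc, if_neg (by omega), if_neg (by omega), map_sub,
    φ_Emid hn (by omega) (by omega), φ_Emid hn (by omega) (by omega), sub_self]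

lemma L_le_ker (hn : 3 ≤ n) : Lsub n ≤ (φ n).ker := by
  rw [Lsub, AddSubgroup.closure_le]
  rintro v (rfl | rfl | ⟨m, hm, rfl⟩)
  · exact φ_D1 hn
  · exact φ_D2 hn
  · rcases Nat.eq_zero_or_pos m with rfl | h1
    · exact φ_Sc0 hn
    · rcases Nat.lt_or_ge m (n - 2) with h | h
      · exact φ_ScMid hn h1 (by omega)
      · have : m = n - 2 := le_antisymm hm h
        rw [this]; exact φ_ScLast hn

lemma φ_g (hn : 3 ≤ n) : φ n (gv n) = 1 := by
  rw [gv, map_sub, φ_Hv, φ_E1 hn]; ring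

lemma φ_surj (hn : 3 ≤ n) : Function.Surjective (φ n) := by
  intro y
  obtain ⟨k, rfl⟩ := ZMod.intCast_surjective y
  exact ⟨k • gv n, by rw [map_zsmul, φ_g hn, zsmul_eq_mul, mul_one]⟩
end

section
variable {n : ℕ}

open Fin.NatCast in
lemma hbase (hn : 3 ≤ n) (a : Fin (n + 1)) :
    ∃ c : ℤ, Pi.single a (1 : ℤ) - c • gv n ∈ Lsub n := by
  have ha : ((a : ℕ) : Fin (n + 1)) = a := Fin.cast_val_eq_self a
  have hsingle : Pi.single a (1 : ℤ) = Ev n (a : ℕ) := by rw [Ev, ha]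
  rcases Nat.eq_zero_or_pos (a : ℕ) with h0 | h0
  · refine ⟨-((n : ℤ) + 3), ?_⟩
    have : Pi.single a (1 : ℤ) = Hv n := by
      rw [hsingle, h0, Hv, Ev, Nat.cast_zero]
    rw [this, neg_zsmul, sub_neg_eq_add]
    exact q0 hn
  rcases eq_or_ne (a : ℕ) 1 with h1 | h1
  · refine ⟨-((n : ℤ) + 4), ?_⟩
    rw [hsingle, h1, neg_zsmul, sub_neg_eq_add]
    exact q1 hn
  rcases eq_or_ne (a : ℕ) n with h2 | h2
  · refine ⟨-((n : ℤ) + 1), ?_⟩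
    rw [hsingle, h2, neg_zsmul, sub_neg_eq_add]
    exact qn hn
  · refine ⟨(n : ℤ) + 2, ?_⟩
    rw [hsingle]
    have hle : (a : ℕ) ≤ n - 1 := by have := a.isLt; omega
    exact qj hn (by omega) hle

lemma index_eq (hn : 3 ≤ n) : (Lsub n).index = n ^ 2 := by
  haveI : NeZero (n ^ 2) := ⟨by positivity⟩
  -- lower bound : n ^ 2 divides the index
  have hker : (φ n).ker.index = n ^ 2 := by
    have htop : (φ n).range = ⊤ := AddMonoidHom.range_eq_top.mpr (φ_surj hn)
    rw [AddSubgroup.index_ker, htop, Nat.card_congr AddSubgroup.topEquiv.toEquiv,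
      Nat.card_zmod]
  have hdvd : n ^ 2 ∣ (Lsub n).index := hker ▸ AddSubgroup.index_dvd_of_le (L_le_ker hn)
  -- upper bound : surjection from `ZMod (n ^ 2)` onto the quotient
  set mk : (Fin (n + 1) → ℤ) →+ (Fin (n + 1) → ℤ) ⧸ Lsub n :=
    QuotientAddGroup.mk' (Lsub n) with hmk
  have hgz : (zmultiplesHom _ (mk (gv n))) ((n ^ 2 : ℕ) : ℤ) = 0 := by
    rw [zmultiplesHom_apply, ← map_zsmul]
    rw [hmk, QuotientAddGroup.mk'_apply, QuotientAddGroup.eq_zero_iff]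
    have : ((n ^ 2 : ℕ) : ℤ) • gv n = ((n : ℤ) ^ 2) • gv n := by push_cast; ring_nf
    rw [this]
    exact qg hn
  set ψ : ZMod (n ^ 2) →+ (Fin (n + 1) → ℤ) ⧸ Lsub n :=
    ZMod.lift (n ^ 2) ⟨zmultiplesHom _ (mk (gv n)), hgz⟩ with hψ
  have hψ_int : ∀ k : ℤ, ψ ((k : ZMod (n ^ 2))) = k • mk (gv n) := fun k => by
    rw [hψ, ZMod.lift_coe]; rfl
  have hψ_surj : Function.Surjective ψ := by
    have hrange : ∀ v : Fin (n + 1) → ℤ, mk v ∈ ψ.range := by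
      intro v
      have hv : v = ∑ a : Fin (n + 1), (v a) • Pi.single a (1 : ℤ) := by
        ext j
        rw [Finset.sum_apply]
        rw [Finset.sum_eq_single j (fun b _ hb => by simp [Pi.single_apply, hb]) (by simp)]
        simp
      rw [hv, map_sum]
      refine sum_mem fun a _ => ?_
      rw [map_zsmul]
      refine zsmul_mem ?_ _
      obtain ⟨c, hc⟩ := hbase hn a
      refine ⟨(c : ZMod (n ^ 2)), ?_⟩
      rw [hψ_int c]
      have : mk (Pi.single a (1 : ℤ)) - c • mk (gv n) = mk (Pi.single a 1 - c • gv n) := by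
        rw [map_sub, map_zsmul]
      rw [eq_comm, ← sub_eq_zero, this, hmk, QuotientAddGroup.mk'_apply,
        QuotientAddGroup.eq_zero_iff]
      exact hc
    intro q
    obtain ⟨v, rfl⟩ := QuotientAddGroup.mk'_surjective (Lsub n) q
    exact hrange v
  haveI hfin : Finite ((Fin (n + 1) → ℤ) ⧸ Lsub n) := Finite.of_surjective ψ hψ_surj
  have hcard : (Lsub n).index ≤ n ^ 2 := by
    have := Nat.card_le_card_of_surjective ψ hψ_surj
    rwa [Nat.card_zmod] at this
  have hpos : 0 < (Lsub n).index := Nat.card_pos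
  exact le_antisymm hcard (Nat.le_of_dvd hpos hdvd)
end


/-- coordinatewise cast to ℚ -/
def cQ (n : ℕ) : (Fin (n + 1) → ℤ) →+ (Fin (n + 1) → ℚ) :=
  AddMonoidHom.mk' (fun v j => ((v j : ℤ) : ℚ)) (by
    intro a b; funext j; push_cast; simp)

section
variable {n : ℕ}

lemma famQ_eq : (fun (i : Fin (n + 1)) (j : Fin (n + 1)) => ((famF n i j : ℤ) : ℚ)) =
    fun i => cQ n (famF n i) := rfl

open Fin.NatCast in
lemma gen_sub_range (hn : 3 ≤ n) : Lgen n ⊆ Set.range (famF n) := by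
  rintro v (rfl | rfl | ⟨m, hm, rfl⟩)
  · exact ⟨((0 : ℕ) : Fin (n + 1)), by
      rw [famF, Fin.val_cast_of_lt (by omega), if_pos rfl]⟩
  · refine ⟨((1 : ℕ) : Fin (n + 1)), ?_⟩
    rw [famF, Fin.val_cast_of_lt (by omega), if_neg (by omega), if_pos rfl]
  · refine ⟨((m + 2 : ℕ) : Fin (n + 1)), ?_⟩
    have hm' : m ≤ n - 2 := hm
    rw [famF, Fin.val_cast_of_lt (by omega), if_neg (by omega), if_neg (by omega)]
    congr 1

lemma mem_span_of_mem (hn : 3 ≤ n) {v : Fin (n + 1) → ℤ} (hv : v ∈ Lsub n) :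
    cQ n v ∈ Submodule.span ℚ (Set.range fun i => cQ n (famF n i)) := by
  set p := Submodule.span ℚ (Set.range fun i => cQ n (famF n i)) with hp
  refine AddSubgroup.closure_induction ?_ ?_ ?_ ?_ hv
  · intro x hx
    obtain ⟨i, rfl⟩ := gen_sub_range hn hx
    exact Submodule.subset_span ⟨i, rfl⟩
  · rw [map_zero]; exact p.zero_mem
  · intro x y _ _ hx hy; rw [map_add]; exact p.add_mem hx hy
  · intro x _ hx; rw [map_neg]; exact p.neg_mem hx

lemma cQ_zsmul (k : ℤ) (v : Fin (n + 1) → ℤ) : cQ n (k • v) = (k : ℚ) • cQ n v := by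
  rw [map_zsmul, Int.cast_smul_eq_zsmul]

lemma g_mem_span (hn : 3 ≤ n) :
    cQ n (gv n) ∈ Submodule.span ℚ (Set.range fun i => cQ n (famF n i)) := by
  have h := mem_span_of_mem hn (qg hn)
  rw [cQ_zsmul] at h
  have hne : (((n : ℤ) ^ 2 : ℤ) : ℚ) ≠ 0 := by positivity
  have := Submodule.smul_mem _ ((((n : ℤ) ^ 2 : ℤ) : ℚ))⁻¹ h
  rwa [inv_smul_smul₀ hne] at this

lemma single_mem_span (hn : 3 ≤ n) (a : Fin (n + 1)) :
    Pi.single a (1 : ℚ) ∈ Submodule.span ℚ (Set.range fun i => cQ n (famF n i)) := by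
  obtain ⟨c, hc⟩ := hbase hn a
  have h1 := mem_span_of_mem hn hc
  rw [map_sub, cQ_zsmul] at h1
  have h2 : cQ n (Pi.single a (1 : ℤ)) ∈
      Submodule.span ℚ (Set.range fun i => cQ n (famF n i)) := by
    have := Submodule.add_mem _ h1 (Submodule.smul_mem _ (c : ℚ) (g_mem_span hn))
    rwa [sub_add_cancel] at this
  have h3 : cQ n (Pi.single a (1 : ℤ)) = Pi.single a (1 : ℚ) := by
    funext j
    by_cases hj : j = a <;>
      simp [cQ, AddMonoidHom.mk', Pi.single_apply, hj]
  rwa [h3] at h2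

lemma li (hn : 3 ≤ n) :
    LinearIndependent ℚ
      (fun (i : Fin (n + 1)) (j : Fin (n + 1)) => ((famF n i j : ℤ) : ℚ)) := by
  rw [famQ_eq]
  refine linearIndependent_of_top_le_span_of_card_eq_finrank ?_ ?_
  · intro x _
    have hx : x = ∑ a : Fin (n + 1), (x a) • (Pi.single a (1 : ℚ) : Fin (n + 1) → ℚ) := by
      ext j
      rw [Finset.sum_apply]
      rw [Finset.sum_eq_single j (fun b _ hb => by simp [Pi.single_apply, hb]) (by simp)]
      simp
    rw [hx]
    exact sum_mem fun a _ => Submodule.smul_mem _ _ (single_mem_span hn a)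
  · rw [Module.finrank_pi ℚ]
end

/-- The `n+1` vectors `D₁, D₂, S₀, …, S_{n-2}` generate a subgroup of `ℤ^{n+1}` of finite
index equal to `n²`; in particular they are linearly independent over `ℚ` (hence form a
basis of `ℚ^{n+1}`). -/
theorem configuration_rational_basis (n : ℕ) (hn : 3 ≤ n) :
    (AddSubgroup.closure
        (insert (D₁ n) (insert (D₂ n) (Sc n '' Set.Iic (n - 2))))).index = n ^ 2 ∧
      LinearIndependent ℚ
        (fun (i : Fin (n + 1)) (j : Fin (n + 1)) => ((famF n i j : ℤ) : ℚ)) := by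
  constructor
  · exact index_eq hn
  · exact li hn
end
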